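/- (Banach–Alaoglu for order-preserving functionals) Let $E$ be a vector space with an order unit $1_E$. The set $E^O$ of all weakly additive, order-preserving functionals $f\colon E \to \mathbb{R}$ with $f(1_E) = 1$ is compact in the topology of pointwise convergence. Moreover, if $E$ is separable, then $E^O$ is metrizable in this topology. -/

import Mathlib

open Topology Filter

/-- The order norm `‖x‖ = inf {c > 0 : -c•e ≤ x ≤ c•e}` of a space with order unit `e`. -/
noncomputable def ordNorm {L : Type*} [AddCommGroup L] [PartialOrder L] [Module ℝ L]
    (e x : L) : ℝ :=
  sInf {c : ℝ | 0 < c ∧ -(c • e) ≤ x ∧ x ≤ c • e}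

/-- `e` is an order unit: every element is bounded by a multiple of `e`. -/
def IsOrderUnit {L : Type*} [AddCommGroup L] [PartialOrder L] [Module ℝ L] (e : L) : Prop :=
  ∀ x : L, ∃ l : ℝ, 0 < l ∧ -(l • e) ≤ x ∧ x ≤ l • e

/-- The space is Archimedean with respect to the order unit `e`. -/
def IsArch {L : Type*} [AddCommGroup L] [PartialOrder L] [Module ℝ L] (e : L) : Prop :=
  ∀ x : L, (∀ n : ℕ, 0 < n → (n : ℝ) • x ≤ e) → x ≤ 0

/-- An operator `T` is weakly additive with respect to the order unit `e`. -/
def WAddOp {L M : Type*} [AddCommGroup L] [Module ℝ L] [AddCommGroup M] [Module ℝ M]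
    (e : L) (T : L → M) : Prop :=
  ∀ x : L, ∀ l : ℝ, T (x + l • e) = T x + l • T e

section Aux

variable {E : Type*} [AddCommGroup E] [PartialOrder E] [IsOrderedAddMonoid E] [Module ℝ E]

lemma wadd_f0 (eE : E) (f : E → ℝ) (hw : WAddOp eE f) : f 0 = 0 := by
  have h := hw 0 1
  simp only [zero_add, one_smul, smul_eq_mul, one_mul] at h
  linarith

lemma key_lip (eE : E) (f : E → ℝ) (hw : WAddOp eE f) (hm : Monotone f)
    (h1 : f eE = 1) {x d : E} {c : ℝ}
    (h2 : -(c • eE) ≤ x - d) (h3 : x - d ≤ c • eE) : |f x - f d| ≤ c := by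
  have hx : x ≤ d + c • eE := by
    have h := sub_le_iff_le_add.mp h3
    rwa [add_comm] at h
  have hd' : d ≤ x + c • eE := by
    have h' : d - c • eE ≤ x := by
      have h := add_le_add_left h2 d
      rw [sub_add_cancel] at h
      rwa [neg_add_eq_sub] at h
    exact sub_le_iff_le_add.mp h'
  have e1 : f (d + c • eE) = f d + c := by
    rw [hw d c, h1, smul_eq_mul, mul_one]
  have e2 : f (x + c • eE) = f x + c := by
    rw [hw x c, h1, smul_eq_mul, mul_one]
  have b1 : f x ≤ f d + c := e1 ▸ hm hx
  have b2 : f d ≤ f x + c := e2 ▸ hm hd'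
  rw [abs_sub_le_iff]
  constructor <;> linarith

end Aux

theorem stmt19 {E : Type*}
    [AddCommGroup E] [PartialOrder E] [IsOrderedAddMonoid E] [Module ℝ E] [PosSMulStrictMono ℝ E]
    (eE : E) (huE : IsOrderUnit eE) (haE : IsArch eE) :
    IsCompact {f : E → ℝ | WAddOp eE f ∧ Monotone f ∧ f eE = 1} ∧
      ((∃ D : Set E, D.Countable ∧
          ∀ x : E, ∀ ε : ℝ, 0 < ε → ∃ d ∈ D, ordNorm eE (x - d) < ε) →
        TopologicalSpace.MetrizableSpace
          {f : E → ℝ // WAddOp eE f ∧ Monotone f ∧ f eE = 1}) := by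
  classical
  have approx : ∀ (g : E → ℝ), WAddOp eE g → Monotone g → g eE = 1 →
      ∀ (x d : E) (ε : ℝ), ordNorm eE (x - d) < ε → |g x - g d| < ε := by
    intro g hw hm h1 x d ε hε
    have hne : {c : ℝ | 0 < c ∧ -(c • eE) ≤ x - d ∧ x - d ≤ c • eE}.Nonempty := huE (x - d)
    obtain ⟨c, hc, hclt⟩ := exists_lt_of_csInf_lt hne hε
    obtain ⟨hc0, hc1, hc2⟩ := hc
    exact lt_of_le_of_lt (key_lip eE g hw hm h1 hc1 hc2) hclt
  constructor
  · -- compactness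
    have hclosed : IsClosed {f : E → ℝ | WAddOp eE f ∧ Monotone f ∧ f eE = 1} := by
      have h1 : IsClosed {f : E → ℝ | WAddOp eE f} := by
        have heq : {f : E → ℝ | WAddOp eE f} =
            ⋂ (x : E) (l : ℝ), {f : E → ℝ | f (x + l • eE) = f x + l • f eE} := by
          ext f
          simp only [Set.mem_setOf_eq, Set.mem_iInter, WAddOp]
        rw [heq]
        exact isClosed_iInter fun x => isClosed_iInter fun l =>
          isClosed_eq (continuous_apply _)
            ((continuous_apply x).add ((continuous_apply eE).const_smul l))
      have h2 : IsClosed {f : E → ℝ | Monotone f} := by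
        have heq : {f : E → ℝ | Monotone f} =
            ⋂ (p : E × E) (_ : p.1 ≤ p.2), {f : E → ℝ | f p.1 ≤ f p.2} := by
          ext f
          simp only [Set.mem_setOf_eq, Set.mem_iInter]
          exact ⟨fun h p hp => h hp, fun h a b hab => h (a, b) hab⟩
        rw [heq]
        exact isClosed_iInter fun p => isClosed_iInter fun _ =>
          isClosed_le (continuous_apply _) (continuous_apply _)
      have h3 : IsClosed {f : E → ℝ | f eE = 1} :=
        isClosed_eq (continuous_apply eE) continuous_const
      exact h1.inter (h2.inter h3)
    choose l hl0 hl1 hl2 using huE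
    refine IsCompact.of_isClosed_subset
      (isCompact_univ_pi (fun x => isCompact_Icc (a := -(l x)) (b := l x))) hclosed ?_
    rintro f ⟨hw, hm, h1⟩
    have hf0 : f 0 = 0 := wadd_f0 eE f hw
    intro x _
    have elo : f (-(l x • eE)) = -(l x) := by
      have h := hw 0 (-(l x))
      rw [zero_add, neg_smul, neg_smul] at h
      rw [h, hf0, smul_eq_mul, h1, mul_one, zero_add]
    have ehi : f (l x • eE) = l x := by
      have h := hw 0 (l x)
      rw [zero_add] at h
      rw [h, hf0, smul_eq_mul, h1, mul_one, zero_add]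
    exact ⟨elo ▸ hm (hl1 x), ehi ▸ hm (hl2 x)⟩
  · rintro ⟨D, hDc, hdense⟩
    haveI : Countable ↥D := hDc.to_subtype
    set T := {f : E → ℝ // WAddOp eE f ∧ Monotone f ∧ f eE = 1} with hT
    let r : T → (↥D → ℝ) := fun f d => f.1 d.1
    have hr_cont : Continuous r :=
      continuous_pi fun d => (continuous_apply (d.1 : E)).comp continuous_subtype_val
    have hr_inj : Function.Injective r := by
      intro f g hfg
      apply Subtype.ext
      funext x
      refine eq_of_forall_dist_le fun ε hε => ?_
      obtain ⟨d, hd, hdn⟩ := hdense x (ε / 3) (by linarith)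
      have a1 := approx f.1 f.2.1 f.2.2.1 f.2.2.2 x d (ε / 3) hdn
      have a2 := approx g.1 g.2.1 g.2.2.1 g.2.2.2 x d (ε / 3) hdn
      have hfd : f.1 d = g.1 d := congrFun hfg ⟨d, hd⟩
      rw [Real.dist_eq]
      have t1 : |f.1 x - g.1 x| ≤ |f.1 x - f.1 d| + |f.1 d - g.1 x| := abs_sub_le _ _ _
      have t2 : |f.1 d - g.1 x| = |g.1 x - g.1 d| := by rw [hfd, abs_sub_comm]
      linarith
    have hr_ind : Topology.IsInducing r := by
      rw [Topology.isInducing_iff_nhds]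
      intro f
      refine le_antisymm (Filter.tendsto_iff_comap.mp (hr_cont.tendsto f)) ?_
      have hnhds : 𝓝 f = ⨅ x : E, Filter.comap (fun g : T => g.1 x) (𝓝 (f.1 x)) := by
        rw [nhds_induced, nhds_pi, Filter.pi, Filter.comap_iInf]
        simp only [Filter.comap_comap]
        rfl
      rw [hnhds, le_iInf_iff]
      intro x
      rw [← Filter.tendsto_iff_comap]
      rw [Metric.tendsto_nhds]
      intro ε hε
      obtain ⟨d, hd, hdn⟩ := hdense x (ε / 3) (by linarith)
      have hev : {u : ↥D → ℝ | dist (u ⟨d, hd⟩) (r f ⟨d, hd⟩) < ε / 3} ∈ 𝓝 (r f) := by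
        have hc : Tendsto (fun u : ↥D → ℝ => u ⟨d, hd⟩) (𝓝 (r f)) (𝓝 (r f ⟨d, hd⟩)) :=
          (continuous_apply (⟨d, hd⟩ : ↥D)).tendsto (r f)
        exact Metric.tendsto_nhds.mp hc (ε / 3) (by linarith)
      filter_upwards [Filter.preimage_mem_comap hev] with g hg
      have hgd : |g.1 d - f.1 d| < ε / 3 := by
        simpa [r, Real.dist_eq] using hg
      have a1 := approx g.1 g.2.1 g.2.2.1 g.2.2.2 x d (ε / 3) hdn
      have a2 := approx f.1 f.2.1 f.2.2.1 f.2.2.2 x d (ε / 3) hdn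
      rw [Real.dist_eq]
      have t1 : |g.1 x - f.1 x| ≤ |g.1 x - g.1 d| + |g.1 d - f.1 x| := abs_sub_le _ _ _
      have t2 : |g.1 d - f.1 x| ≤ |g.1 d - f.1 d| + |f.1 d - f.1 x| := abs_sub_le _ _ _
      have t3 : |f.1 d - f.1 x| = |f.1 x - f.1 d| := abs_sub_comm _ _
      linarith
    have hemb : Topology.IsEmbedding r := ⟨hr_ind, hr_inj⟩
    exact hemb.metrizableSpace
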